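/- Let α : F ⟶ G be a natural transformation between pullback-preserving functors F, G : L → Cat such that every naturality square is a pullback of categories, and let f : x → y be a morphism in L. Then the canonical functor from F x to the comma category α_y ↓ G f (induced by the naturality square α_y ∘ F f = G f ∘ α_x) is the pullback along G f of the canonical functor F y → α_y ↓ G y, and in particular it admits a left adjoint over G x. -/

import Mathlib

open CategoryTheory

universe u v

/-- The canonical functor `E ⥤ p ↓ 𝟭 B`, sending `e` to `(e, p e, 𝟙)`. -/
def commaUnit {E B : Type*} [Category E] [Category B] (p : E ⥤ B) :
    E ⥤ Comma p (𝟭 B) where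
  obj e := { left := e, right := p.obj e, hom := 𝟙 _ }
  map f := { left := f, right := p.map f, w := by simp }

section ZetaAuxSec
namespace ZetaAux
open CategoryTheory Limits

/-- a reducible version of `Cat.of`. -/
abbrev catOf (C : Type u) [Category.{u} C] : Cat.{u, u} := Bundled.mk C inferInstance

theorem cat_hom_ext {C D : Cat.{u, u}} {F G : C ⟶ D} (h_obj : ∀ X, F.toFunctor.obj X = G.toFunctor.obj X)
    (h_map : ∀ (X Y) (f : X ⟶ Y),
      F.toFunctor.map f = eqToHom (h_obj X) ≫ G.toFunctor.map f ≫ eqToHom (h_obj Y).symm) : F = G :=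
  Cat.ext (CategoryTheory.Functor.ext h_obj h_map)


theorem comma_obj_ext {A T C : Type*} [Category A] [Category T] [Category C]
    {L : A ⥤ C} {R : T ⥤ C} {a b : Comma L R}
    (h1 : a.left = b.left) (h2 : a.right = b.right)
    (h3 : a.hom ≫ eqToHom (congrArg R.obj h2) = eqToHom (congrArg L.obj h1) ≫ b.hom) :
    a = b := by
  obtain ⟨al, ar, ah⟩ := a
  obtain ⟨bl, br, bh⟩ := b
  dsimp at h1 h2 h3
  subst h1; subst h2
  simpa using h3

theorem comma_hom_congr {A T C : Type*} [Category A] [Category T] [Category C]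
    {L : A ⥤ C} {R : T ⥤ C} {a b : Comma L R} (h : a = b) :
    a.hom = eqToHom (congrArg L.obj (congrArg Comma.left h)) ≫ b.hom ≫
      eqToHom (congrArg R.obj (congrArg Comma.right h)).symm := by
  subst h; simp

variable {E X B : Cat.{u, u}}

section CommaPB
variable (p : E ⟶ B) (q : X ⟶ B)

def extendGen : Comma (p.toFunctor : ↑E ⥤ ↑B) (q.toFunctor : ↑X ⥤ ↑B) ⥤ Comma (p.toFunctor : ↑E ⥤ ↑B) (𝟭 ↑B) where
  obj c := { left := c.left, right := q.toFunctor.obj c.right, hom := c.hom }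
  map u := { left := u.left, right := q.toFunctor.map u.right, w := by simpa using u.w }

def extendGenCat : catOf (Comma (p.toFunctor : ↑E ⥤ ↑B) (q.toFunctor : ↑X ⥤ ↑B)) ⟶
    catOf (Comma (p.toFunctor : ↑E ⥤ ↑B) (𝟭 ↑B)) := ⟨extendGen p q⟩

@[simp] lemma extendGenCat_toFunctor : (extendGenCat p q).toFunctor = extendGen p q := rfl

def sndGenCat : catOf (Comma (p.toFunctor : ↑E ⥤ ↑B) (q.toFunctor : ↑X ⥤ ↑B)) ⟶ X :=
  ⟨Comma.snd (p.toFunctor : ↑E ⥤ ↑B) (q.toFunctor : ↑X ⥤ ↑B)⟩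

@[simp] lemma sndGenCat_toFunctor : (sndGenCat p q).toFunctor = Comma.snd p.toFunctor q.toFunctor := rfl

def sndUnitCat : catOf (Comma (p.toFunctor : ↑E ⥤ ↑B) (𝟭 ↑B)) ⟶ B :=
  ⟨Comma.snd (p.toFunctor : ↑E ⥤ ↑B) (𝟭 ↑B)⟩

@[simp] lemma sndUnitCat_toFunctor : (sndUnitCat p).toFunctor = Comma.snd p.toFunctor (𝟭 ↑B) := rfl

lemma extend_snd_w : extendGenCat p q ≫ sndUnitCat p = sndGenCat p q ≫ q := rfl

lemma cond_obj (s : PullbackCone (sndUnitCat p) q) (t : ↑s.pt) :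
    (s.fst.toFunctor.obj t).right = q.toFunctor.obj (s.snd.toFunctor.obj t) :=
  Functor.congr_obj (congrArg Cat.Hom.toFunctor s.condition) t

def coneLift (s : PullbackCone (sndUnitCat p) q) :
    (↑s.pt : Type u) ⥤ Comma (p.toFunctor : ↑E ⥤ ↑B) (q.toFunctor : ↑X ⥤ ↑B) where
  obj t :=
    { left := (s.fst.toFunctor.obj t).left
      right := s.snd.toFunctor.obj t
      hom := (s.fst.toFunctor.obj t).hom ≫
        eqToHom (show (s.fst.toFunctor.obj t).right = q.toFunctor.obj (s.snd.toFunctor.obj t) from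
          cond_obj p q s t) }
  map {t t'} u :=
    { left := (s.fst.toFunctor.map u).left
      right := s.snd.toFunctor.map u
      w := by
        have h1 := (s.fst.toFunctor.map u).w
        have h2 : (s.fst.toFunctor.map u).right =
            eqToHom (cond_obj p q s t) ≫ q.toFunctor.map (s.snd.toFunctor.map u) ≫
              eqToHom (cond_obj p q s t').symm := by
          simpa using Functor.congr_hom (congrArg Cat.Hom.toFunctor s.condition) u
        dsimp at h1 ⊢
        rw [← Category.assoc, h1, h2]
        simp }
  map_id t := by apply CommaMorphism.ext <;> simp
  map_comp u v := by apply CommaMorphism.ext <;> simp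

theorem isPullback_extend : IsPullback (extendGenCat p q) (sndGenCat p q) (sndUnitCat p) q := by
  apply IsPullback.of_isLimit (c := PullbackCone.mk _ _ (extend_snd_w p q))
  apply PullbackCone.IsLimit.mk
  case lift => exact fun s => ⟨coneLift p q s⟩
  case fac_left =>
    intro s
    apply cat_hom_ext
    case h_obj =>
      refine fun t => id ?_
      show (extendGen p q).obj ((coneLift p q s).obj t) = s.fst.toFunctor.obj t
      refine comma_obj_ext (h1 := id rfl)
        (h2 := id (show q.toFunctor.obj (s.snd.toFunctor.obj t) = (s.fst.toFunctor.obj t).right from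
          (cond_obj p q s t).symm)) ?_
      simp [coneLift, extendGen]
      erw [eqToHom_trans, eqToHom_refl, eqToHom_refl]
      simp
    case h_map =>
      intro t t' u
      apply CommaMorphism.ext
      · show ((extendGen p q).map ((coneLift p q s).map u)).left = _
        simp [coneLift, extendGen]
        erw [Comma.eqToHom_left, Comma.eqToHom_left]
        simp
      · show ((extendGen p q).map ((coneLift p q s).map u)).right = _
        have h2 : (s.fst.toFunctor.map u).right =
            eqToHom (cond_obj p q s t) ≫ q.toFunctor.map (s.snd.toFunctor.map u) ≫
              eqToHom (cond_obj p q s t').symm := by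
          simpa using Functor.congr_hom (congrArg Cat.Hom.toFunctor s.condition) u
        simp [coneLift, extendGen, h2]
        erw [Comma.eqToHom_right, Comma.eqToHom_right]
        simp
  case fac_right => intro s; rfl
  case uniq =>
    intro s m hm1 hm2
    have hm1obj : ∀ t, (extendGen p q).obj (m.toFunctor.obj t) = s.fst.toFunctor.obj t :=
      fun t => Functor.congr_obj (congrArg Cat.Hom.toFunctor hm1) t
    apply cat_hom_ext
    case h_obj =>
      refine fun t => id ?_
      have e1 : (extendGen p q).obj (m.toFunctor.obj t) = s.fst.toFunctor.obj t := Functor.congr_obj (congrArg Cat.Hom.toFunctor hm1) t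
      have e2 : (m.toFunctor.obj t).right = s.snd.toFunctor.obj t := Functor.congr_obj (congrArg Cat.Hom.toFunctor hm2) t
      show m.toFunctor.obj t = (coneLift p q s).obj t
      have hl : (m.toFunctor.obj t).left = ((coneLift p q s).obj t).left := by
        have h := congrArg Comma.left e1
        dsimp [extendGen] at h
        simpa [coneLift] using h
      refine comma_obj_ext (h1 := hl) (h2 := id (show (m.toFunctor.obj t).right = s.snd.toFunctor.obj t from e2)) ?_
      have hh := comma_hom_congr e1
      dsimp [extendGen] at hh ⊢
      rw [hh]
      simp [coneLift]
      erw [eqToHom_trans]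
    case h_map =>
      intro t t' u
      apply CommaMorphism.ext
      · have h1 := Functor.congr_hom (congrArg Cat.Hom.toFunctor hm1) u
        have h1' : ((extendGen p q).map (m.toFunctor.map u)).left =
            (eqToHom (hm1obj t) ≫ s.fst.toFunctor.map u ≫
              eqToHom (hm1obj t').symm).left := congrArg CommaMorphism.left h1
        show (m.toFunctor.map u).left = _
        dsimp [extendGen] at h1'
        rw [h1']
        simp [coneLift]
        erw [Comma.eqToHom_left, Comma.eqToHom_left, Comma.eqToHom_left, Comma.eqToHom_left]
      · have h2 := Functor.congr_hom (congrArg Cat.Hom.toFunctor hm2) u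
        show (m.toFunctor.map u).right = _
        dsimp [sndGenCat] at h2
        erw [show (m.toFunctor.map u).right = _ from h2]
        simp [coneLift, Comma.eqToHom_right]
        erw [Comma.eqToHom_right, Comma.eqToHom_right]

end CommaPB

variable {P E X B : Cat.{u, u}}

section Pb
variable (p : E ⟶ B) (q : X ⟶ B)

/-- Objects of the strict pullback of `p` and `q`. -/
structure PbObj : Type u where
  fst : E
  snd : X
  w : p.toFunctor.obj fst = q.toFunctor.obj snd

variable {p q} in
@[ext] structure PbHom (a b : PbObj p q) : Type u where
  fst : a.fst ⟶ b.fst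
  snd : a.snd ⟶ b.snd
  w : p.toFunctor.map fst ≫ eqToHom b.w = eqToHom a.w ≫ q.toFunctor.map snd

instance : Category (PbObj p q) where
  Hom a b := PbHom a b
  id a := ⟨𝟙 _, 𝟙 _, by simp⟩
  comp f g := ⟨f.fst ≫ g.fst, f.snd ≫ g.snd, by
    rw [Functor.map_comp, Functor.map_comp, Category.assoc, g.w, ← Category.assoc, f.w]
    simp⟩
  id_comp f := by apply PbHom.ext <;> simp
  comp_id f := by apply PbHom.ext <;> simp
  assoc f g h := by apply PbHom.ext <;> simp

variable {p q}

theorem PbObj.ext' {a b : PbObj p q} (h1 : a.fst = b.fst) (h2 : a.snd = b.snd) : a = b := by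
  cases a; cases b; cases h1; cases h2; rfl

@[simp] theorem Pb_id_fst (a : PbObj p q) : (𝟙 a : a ⟶ a).fst = 𝟙 a.fst := rfl
@[simp] theorem Pb_id_snd (a : PbObj p q) : (𝟙 a : a ⟶ a).snd = 𝟙 a.snd := rfl
@[simp] theorem Pb_comp_fst {a b c : PbObj p q} (f : a ⟶ b) (g : b ⟶ c) :
    (f ≫ g).fst = f.fst ≫ g.fst := rfl
@[simp] theorem Pb_comp_snd {a b c : PbObj p q} (f : a ⟶ b) (g : b ⟶ c) :
    (f ≫ g).snd = f.snd ≫ g.snd := rfl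

@[simp] theorem Pb_eqToHom_fst {a b : PbObj p q} (h : a = b) :
    (eqToHom h).fst = eqToHom (congrArg PbObj.fst h) := by subst h; rfl
@[simp] theorem Pb_eqToHom_snd {a b : PbObj p q} (h : a = b) :
    (eqToHom h).snd = eqToHom (congrArg PbObj.snd h) := by subst h; rfl

variable (p q)

def PbFst : PbObj p q ⥤ (E : Type u) where
  obj a := a.fst
  map f := f.fst

def PbSnd : PbObj p q ⥤ (X : Type u) where
  obj a := a.snd
  map f := f.snd

def PbFstCat : catOf (PbObj p q) ⟶ E := ⟨PbFst p q⟩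
def PbSndCat : catOf (PbObj p q) ⟶ X := ⟨PbSnd p q⟩

@[simp] lemma PbFstCat_toFunctor : (PbFstCat p q).toFunctor = PbFst p q := rfl
@[simp] lemma PbSndCat_toFunctor : (PbSndCat p q).toFunctor = PbSnd p q := rfl

theorem Pb_w : PbFstCat p q ≫ p = PbSndCat p q ≫ q := by
  apply cat_hom_ext (h_obj := fun (a : PbObj p q) => id a.w)
  intro a b f
  have h := f.w
  dsimp [PbFstCat, PbSndCat, PbFst, PbSnd] at h ⊢
  rw [← Category.assoc, ← h]
  simp
  erw [eqToHom_trans, eqToHom_refl]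
  simp

end Pb

section KJ

variable (pf : P ⟶ E) (px : P ⟶ X) (p : E ⟶ B) (q : X ⟶ B)
variable (w : pf ≫ p = px ≫ q)

def Kf : (P : Type u) ⥤ PbObj p q where
  obj e := ⟨pf.toFunctor.obj e, px.toFunctor.obj e, Functor.congr_obj (congrArg Cat.Hom.toFunctor w) e⟩
  map u := ⟨pf.toFunctor.map u, px.toFunctor.map u, by
    have h := Functor.congr_hom (congrArg Cat.Hom.toFunctor w) u
    dsimp at h
    rw [h]; simp⟩
  map_id e := by apply PbHom.ext <;> simp
  map_comp u v := by apply PbHom.ext <;> simp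

def KfCat : P ⟶ catOf (PbObj p q) := ⟨Kf pf px p q w⟩

@[simp] lemma KfCat_toFunctor : (KfCat pf px p q w).toFunctor = Kf pf px p q w := rfl

lemma Kf_fst : KfCat pf px p q w ≫ PbFstCat p q = pf := rfl
lemma Kf_snd : KfCat pf px p q w ≫ PbSndCat p q = px := rfl

variable (hPB : IsPullback pf px p q)

noncomputable def Jf : catOf (PbObj p q) ⟶ P := hPB.lift (PbFstCat p q) (PbSndCat p q) (Pb_w p q)

lemma Jf_fst : Jf pf px p q hPB ≫ pf = PbFstCat p q := hPB.lift_fst _ _ _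
lemma Jf_snd : Jf pf px p q hPB ≫ px = PbSndCat p q := hPB.lift_snd _ _ _

lemma KJ : KfCat pf px p q w ≫ Jf pf px p q hPB = 𝟙 P := by
  apply hPB.hom_ext
  · rw [Category.assoc, Jf_fst, Category.id_comp, Kf_fst]
  · rw [Category.assoc, Jf_snd, Category.id_comp, Kf_snd]

lemma JK : Jf pf px p q hPB ≫ KfCat pf px p q w = 𝟙 (catOf (PbObj p q)) := by
  have hf := Jf_fst pf px p q hPB
  have hs := Jf_snd pf px p q hPB
  apply cat_hom_ext
  case h_obj =>
    refine fun s => id ?_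
    exact PbObj.ext' (id (Functor.congr_obj (congrArg Cat.Hom.toFunctor hf) s)) (id (Functor.congr_obj (congrArg Cat.Hom.toFunctor hs) s))
  case h_map =>
    intro a b g
    have h1 := Functor.congr_hom (congrArg Cat.Hom.toFunctor hf) g
    have h2 := Functor.congr_hom (congrArg Cat.Hom.toFunctor hs) g
    apply PbHom.ext
    · dsimp [KfCat, Kf] at h1 ⊢
      rw [h1]; simp [PbFstCat, PbFst]
      erw [Pb_eqToHom_fst, Pb_eqToHom_fst]
    · dsimp [KfCat, Kf] at h2 ⊢
      rw [h2]; simp [PbSndCat, PbSnd]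
      erw [Pb_eqToHom_snd, Pb_eqToHom_snd]

end KJ

instance commaUnit_faithful {E B : Type*} [Category E] [Category B] (p : E ⥤ B) :
    (commaUnit p).Faithful where
  map_injective h := congrArg CommaMorphism.left h

instance commaUnit_full {E B : Type*} [Category E] [Category B] (p : E ⥤ B) :
    (commaUnit p).Full where
  map_surjective u := ⟨u.left, by
    apply CommaMorphism.ext
    · rfl
    · have := u.w
      simpa [commaUnit] using this⟩

variable {E X B : Cat.{u, u}}

section Adj

variable (p : E ⟶ B) (q : X ⟶ B)
variable (l₀ : Comma (p.toFunctor : ↑E ⥤ ↑B) (𝟭 ↑B) ⥤ (E : Type u))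
variable (adj₀ : l₀ ⊣ commaUnit (p.toFunctor : ↑E ⥤ ↑B))
variable (hl₀ : l₀ ⋙ (p.toFunctor : ↑E ⥤ ↑B) = Comma.snd (p.toFunctor : ↑E ⥤ ↑B) (𝟭 ↑B))

include hl₀

/-- object-level consequence of `hl₀`. -/
lemma cdo (d : Comma (p.toFunctor : ↑E ⥤ ↑B) (𝟭 ↑B)) : p.toFunctor.obj (l₀.obj d) = d.right :=
  Functor.congr_obj hl₀ d

/-- morphism-level consequence of `hl₀`. -/
lemma cdh {d d' : Comma (p.toFunctor : ↑E ⥤ ↑B) (𝟭 ↑B)} (δ : d ⟶ d') :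
    p.toFunctor.map (l₀.map δ) = eqToHom (cdo p l₀ hl₀ d) ≫ δ.right ≫ eqToHom (cdo p l₀ hl₀ d').symm := by
  simpa using Functor.congr_hom hl₀ δ

/-- the inverse-of-`rr` family, built from the counit. -/
noncomputable def se (e : E) : p.toFunctor.obj e ⟶ p.toFunctor.obj e :=
  eqToHom (cdo p l₀ hl₀ ((commaUnit (p.toFunctor : ↑E ⥤ ↑B)).obj e)).symm ≫ p.toFunctor.map (adj₀.counit.app e)

/-- the vertical-defect family of the unit. -/
def rr (d : Comma (p.toFunctor : ↑E ⥤ ↑B) (𝟭 ↑B)) : d.right ⟶ d.right :=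
  (adj₀.unit.app d).right ≫ eqToHom (cdo p l₀ hl₀ d)

instance se_isIso (e : E) : IsIso (se p l₀ adj₀ hl₀ e) := by
  have : IsIso (adj₀.counit.app e) := inferInstance
  unfold se
  have h2 : IsIso (p.toFunctor.map (adj₀.counit.app e)) := Functor.map_isIso _ _
  exact IsIso.comp_isIso' (eqToIso (cdo p l₀ hl₀ ((commaUnit (p.toFunctor : ↑E ⥤ ↑B)).obj e)).symm).isIso_hom h2

/-- (K1) naturality of `rr`. -/
lemma rr_natural {d d' : Comma (p.toFunctor : ↑E ⥤ ↑B) (𝟭 ↑B)} (δ : d ⟶ d') :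
    δ.right ≫ rr p l₀ adj₀ hl₀ d' = rr p l₀ adj₀ hl₀ d ≫ δ.right := by
  have h := congrArg CommaMorphism.right (adj₀.unit.naturality δ)
  dsimp [commaUnit] at h
  unfold rr
  dsimp only [commaUnit, Functor.comp_obj, Functor.id_obj]
  rw [← Category.assoc, h, Category.assoc, cdh p l₀ hl₀ δ]
  simp

/-- (K2) triangle: `rr` at unit objects is inverse to `se`. -/
lemma rr_se (e : E) :
    rr p l₀ adj₀ hl₀ ((commaUnit (p.toFunctor : ↑E ⥤ ↑B)).obj e) ≫ se p l₀ adj₀ hl₀ e = 𝟙 _ := by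
  have h := congrArg CommaMorphism.right (adj₀.right_triangle_components e)
  dsimp [commaUnit] at h
  unfold rr se
  erw [Category.assoc, eqToHom_trans_assoc, eqToHom_refl, Category.id_comp]
  exact h

lemma se_rr (e : E) :
    se p l₀ adj₀ hl₀ e ≫ rr p l₀ adj₀ hl₀ ((commaUnit (p.toFunctor : ↑E ⥤ ↑B)).obj e) = 𝟙 _ := by
  have h := rr_se p l₀ adj₀ hl₀ e
  have h2 : inv (se p l₀ adj₀ hl₀ e) = rr p l₀ adj₀ hl₀ ((commaUnit (p.toFunctor : ↑E ⥤ ↑B)).obj e) :=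
    IsIso.inv_eq_of_inv_hom_id h
  erw [← h2, IsIso.hom_inv_id]

/-- (lem2) naturality of `se`. -/
lemma se_natural {e e' : E} (m : e ⟶ e') :
    p.toFunctor.map m ≫ se p l₀ adj₀ hl₀ e' = se p l₀ adj₀ hl₀ e ≫ p.toFunctor.map m := by
  have h := congrArg (p.toFunctor.map) (adj₀.counit.naturality m)
  rw [Functor.map_comp, Functor.map_comp] at h
  unfold se
  have h2 := cdh p l₀ hl₀ ((commaUnit (p.toFunctor : ↑E ⥤ ↑B)).map m)
  dsimp [commaUnit] at h2 h
  rw [h2] at h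
  erw [Category.assoc, ← h]
  simp
  erw [eqToHom_trans_assoc, eqToHom_refl, Category.id_comp]
  rfl

end Adj

section Adj2

variable (p : E ⟶ B) (q : X ⟶ B)
variable (l₀ : Comma (p.toFunctor : ↑E ⥤ ↑B) (𝟭 ↑B) ⥤ (E : Type u))
variable (adj₀ : l₀ ⊣ commaUnit (p.toFunctor : ↑E ⥤ ↑B))
variable (hl₀ : l₀ ⋙ (p.toFunctor : ↑E ⥤ ↑B) = Comma.snd (p.toFunctor : ↑E ⥤ ↑B) (𝟭 ↑B))

include hl₀

/-- the twisted comparison functor into the slice over `B`. -/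
noncomputable def tau : Comma (p.toFunctor : ↑E ⥤ ↑B) (q.toFunctor : ↑X ⥤ ↑B) ⥤ Comma (p.toFunctor : ↑E ⥤ ↑B) (𝟭 ↑B) where
  obj c := ⟨c.left, q.toFunctor.obj c.right, se p l₀ adj₀ hl₀ c.left ≫ c.hom⟩
  map {c c'} u := ⟨u.left, q.toFunctor.map u.right, by
    dsimp
    rw [← Category.assoc, se_natural p l₀ adj₀ hl₀ u.left, Category.assoc, u.w]
    simp only [Category.assoc, Functor.id_map]⟩
  map_id c := by apply CommaMorphism.ext <;> simp
  map_comp u v := by apply CommaMorphism.ext <;> simp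

/-- the candidate left adjoint, with values in the strict pullback. -/
noncomputable def lAux : Comma (p.toFunctor : ↑E ⥤ ↑B) (q.toFunctor : ↑X ⥤ ↑B) ⥤ PbObj p q where
  obj c := ⟨l₀.obj ((tau p q l₀ adj₀ hl₀).obj c), c.right,
    cdo p l₀ hl₀ ((tau p q l₀ adj₀ hl₀).obj c)⟩
  map {c c'} u := ⟨l₀.map ((tau p q l₀ adj₀ hl₀).map u), u.right, by
    rw [cdh p l₀ hl₀ ((tau p q l₀ adj₀ hl₀).map u)]
    simp [tau]
    erw [eqToHom_trans, eqToHom_refl, Category.comp_id]⟩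
  map_id c := by apply PbHom.ext <;> simp
  map_comp u v := by apply PbHom.ext <;> simp

/-- the strict-pullback version of the comparison functor. -/
def zetaPb : PbObj p q ⥤ Comma (p.toFunctor : ↑E ⥤ ↑B) (q.toFunctor : ↑X ⥤ ↑B) where
  obj s := ⟨s.fst, s.snd, eqToHom s.w⟩
  map {s s'} g := ⟨g.fst, g.snd, by simpa using g.w⟩
  map_id s := by apply CommaMorphism.ext <;> simp
  map_comp g g' := by apply CommaMorphism.ext <;> simp

end Adj2

section Adj3

variable (p : E ⟶ B) (q : X ⟶ B)
variable (l₀ : Comma (p.toFunctor : ↑E ⥤ ↑B) (𝟭 ↑B) ⥤ (E : Type u))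
variable (adj₀ : l₀ ⊣ commaUnit (p.toFunctor : ↑E ⥤ ↑B))
variable (hl₀ : l₀ ⋙ (p.toFunctor : ↑E ⥤ ↑B) = Comma.snd (p.toFunctor : ↑E ⥤ ↑B) (𝟭 ↑B))

include hl₀

/-- (K4): the defect commutes with structure morphisms. -/
lemma hom_rr (d : Comma (p.toFunctor : ↑E ⥤ ↑B) (𝟭 ↑B)) :
    d.hom ≫ rr p l₀ adj₀ hl₀ d =
      rr p l₀ adj₀ hl₀ ((commaUnit (p.toFunctor : ↑E ⥤ ↑B)).obj d.left) ≫ d.hom := by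
  exact rr_natural p l₀ adj₀ hl₀ (d := (commaUnit (p.toFunctor : ↑E ⥤ ↑B)).obj d.left) (d' := d)
    ⟨𝟙 d.left, d.hom, by simp [commaUnit]⟩

/-- the underlying map of the hom-set equivalence of the pulled-back adjunction. -/
noncomputable def psi (c : Comma (p.toFunctor : ↑E ⥤ ↑B) (q.toFunctor : ↑X ⥤ ↑B)) (s : PbObj p q)
    (μ : (lAux p q l₀ adj₀ hl₀).obj c ⟶ s) : c ⟶ (zetaPb p q).obj s where
  left := (adj₀.unit.app ((tau p q l₀ adj₀ hl₀).obj c)).left ≫ μ.fst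
  right := μ.snd
  w := by
    have hu : p.toFunctor.map (adj₀.unit.app ((tau p q l₀ adj₀ hl₀).obj c)).left =
        ((tau p q l₀ adj₀ hl₀).obj c).hom ≫
          (adj₀.unit.app ((tau p q l₀ adj₀ hl₀).obj c)).right := by
      have h := (adj₀.unit.app ((tau p q l₀ adj₀ hl₀).obj c)).w
      simp only [Functor.comp_obj, Functor.id_obj, Functor.id_map] at h
      simpa [commaUnit] using h
    have hμ := μ.w
    have key : ((tau p q l₀ adj₀ hl₀).obj c).hom ≫
        rr p l₀ adj₀ hl₀ ((tau p q l₀ adj₀ hl₀).obj c) = c.hom := by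
      have h := hom_rr p l₀ adj₀ hl₀ ((tau p q l₀ adj₀ hl₀).obj c)
      rw [h]
      have h2 : ((tau p q l₀ adj₀ hl₀).obj c).hom =
          se p l₀ adj₀ hl₀ c.left ≫ c.hom := rfl
      erw [h2, ← Category.assoc]
      have h3 : rr p l₀ adj₀ hl₀
          ((commaUnit (p.toFunctor : ↑E ⥤ ↑B)).obj ((tau p q l₀ adj₀ hl₀).obj c).left) ≫
            se p l₀ adj₀ hl₀ c.left = 𝟙 _ := rr_se p l₀ adj₀ hl₀ c.left
      erw [h3, Category.id_comp]
    dsimp [zetaPb]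
    erw [Functor.map_comp, Category.assoc, hμ, hu]
    rw [← key]
    unfold rr
    simp
    exact (Category.assoc _ _ _).trans ((congrArg (CategoryStruct.comp _) (Category.assoc _ _ _).symm).trans (Category.assoc _ _ _).symm)

lemma psi_injective (c : Comma (p.toFunctor : ↑E ⥤ ↑B) (q.toFunctor : ↑X ⥤ ↑B)) (s : PbObj p q) :
    Function.Injective (psi p q l₀ adj₀ hl₀ c s) := by
  intro μ μ' h
  have h1 : μ.snd = μ'.snd := congrArg CommaMorphism.right h
  have h2 := congrArg CommaMorphism.left h
  dsimp [psi] at h1 h2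
  have hw : p.toFunctor.map μ.fst = p.toFunctor.map μ'.fst := by
    have w1 := μ.w; have w2 := μ'.w
    have e1 : p.toFunctor.map μ.fst = eqToHom ((lAux p q l₀ adj₀ hl₀).obj c).w ≫ q.toFunctor.map μ.snd ≫
        eqToHom s.w.symm := by
      rw [← Category.assoc, ← w1]; simp
    have e2 : p.toFunctor.map μ'.fst = eqToHom ((lAux p q l₀ adj₀ hl₀).obj c).w ≫ q.toFunctor.map μ'.snd ≫
        eqToHom s.w.symm := by
      rw [← Category.assoc, ← w2]; simp
    rw [e1, e2, h1]
  apply PbHom.ext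
  · apply (adj₀.homEquiv ((tau p q l₀ adj₀ hl₀).obj c) s.fst).injective
    erw [Adjunction.homEquiv_unit, Adjunction.homEquiv_unit]
    apply CommaMorphism.ext
    · simp [commaUnit]
      exact h2
    · simp [commaUnit]
      erw [hw]
      rfl
  · exact h1

lemma psi_surjective (c : Comma (p.toFunctor : ↑E ⥤ ↑B) (q.toFunctor : ↑X ⥤ ↑B)) (s : PbObj p q) :
    Function.Surjective (psi p q l₀ adj₀ hl₀ c s) := by
  intro ν
  have νw := ν.w
  dsimp [zetaPb] at νw
  set h0 : q.toFunctor.obj c.right ⟶ p.toFunctor.obj s.fst :=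
    q.toFunctor.map ν.right ≫ eqToHom s.w.symm ≫ inv (se p l₀ adj₀ hl₀ s.fst) with hh0
  have wχ : p.toFunctor.map ν.left ≫ ((commaUnit (p.toFunctor : ↑E ⥤ ↑B)).obj s.fst).hom =
      ((tau p q l₀ adj₀ hl₀).obj c).hom ≫ (𝟭 ↑B).map h0 := by
    have step : ((tau p q l₀ adj₀ hl₀).obj c).hom ≫ h0 = p.toFunctor.map ν.left := by
      have h2 : ((tau p q l₀ adj₀ hl₀).obj c).hom =
          se p l₀ adj₀ hl₀ c.left ≫ c.hom := rfl
      erw [h2, hh0, Category.assoc, ← Category.assoc (c.hom), ← νw]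
      erw [Category.assoc (p.toFunctor.map ν.left), eqToHom_trans_assoc, eqToHom_refl, Category.id_comp]
      erw [← Category.assoc (se p l₀ adj₀ hl₀ _), ← se_natural p l₀ adj₀ hl₀ ν.left, Category.assoc (p.toFunctor.map ν.left)]
      erw [IsIso.hom_inv_id]
      exact Category.comp_id _
    dsimp [commaUnit]
    exact (Category.comp_id _).trans step.symm
  set χ : (tau p q l₀ adj₀ hl₀).obj c ⟶ (commaUnit (p.toFunctor : ↑E ⥤ ↑B)).obj s.fst :=
    ⟨ν.left, h0, wχ⟩ with hχ
  set u := (adj₀.homEquiv ((tau p q l₀ adj₀ hl₀).obj c) s.fst).symm χ with hu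
  have hpu : p.toFunctor.map u = eqToHom (cdo p l₀ hl₀ ((tau p q l₀ adj₀ hl₀).obj c)) ≫ h0 ≫
      se p l₀ adj₀ hl₀ s.fst := by
    rw [hu, Adjunction.homEquiv_counit, Functor.map_comp,
      cdh p l₀ hl₀ χ]
    have : χ.right = h0 := rfl
    rw [this]
    unfold se
    simp [commaUnit]
    erw [Category.assoc]
  have wSP : p.toFunctor.map u ≫ eqToHom s.w =
      eqToHom ((lAux p q l₀ adj₀ hl₀).obj c).w ≫ q.toFunctor.map ν.right := by
    rw [hpu, hh0]
    dsimp only [tau]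
    simp
    erw [eqToHom_trans, eqToHom_refl, Category.comp_id]
    rfl
  refine ⟨⟨u, ν.right, wSP⟩, ?_⟩
  have h3 := (adj₀.homEquiv ((tau p q l₀ adj₀ hl₀).obj c) s.fst).apply_symm_apply χ
  rw [Adjunction.homEquiv_unit] at h3
  have h4 := congrArg CommaMorphism.left h3
  apply CommaMorphism.ext
  · dsimp [psi]
    simp [commaUnit, hχ] at h4 ⊢
    exact h4
  · rfl

lemma psi_natural_left {c c' : Comma (p.toFunctor : ↑E ⥤ ↑B) (q.toFunctor : ↑X ⥤ ↑B)} (δ : c' ⟶ c)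
    {s : PbObj p q} (μ : (lAux p q l₀ adj₀ hl₀).obj c ⟶ s) :
    psi p q l₀ adj₀ hl₀ c' s ((lAux p q l₀ adj₀ hl₀).map δ ≫ μ) =
      δ ≫ psi p q l₀ adj₀ hl₀ c s μ := by
  have h := congrArg CommaMorphism.left (adj₀.unit.naturality ((tau p q l₀ adj₀ hl₀).map δ))
  simp only [Functor.comp_map, Functor.id_map, Comma.comp_left] at h
  have h2 : ((commaUnit (p.toFunctor : ↑E ⥤ ↑B)).map (l₀.map ((tau p q l₀ adj₀ hl₀).map δ))).left =
      l₀.map ((tau p q l₀ adj₀ hl₀).map δ) := rfl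
  rw [h2] at h
  have h3 : ((tau p q l₀ adj₀ hl₀).map δ).left = δ.left := rfl
  rw [h3] at h
  apply CommaMorphism.ext
  · show (adj₀.unit.app ((tau p q l₀ adj₀ hl₀).obj c')).left ≫
      ((lAux p q l₀ adj₀ hl₀).map δ ≫ μ).fst = _
    have h4 : ((lAux p q l₀ adj₀ hl₀).map δ ≫ μ).fst =
        l₀.map ((tau p q l₀ adj₀ hl₀).map δ) ≫ μ.fst := rfl
    erw [h4, ← Category.assoc, ← h]
    dsimp [psi]
    erw [Category.assoc]
    rfl
  · show ((lAux p q l₀ adj₀ hl₀).map δ ≫ μ).snd = _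
    have h5 : ((lAux p q l₀ adj₀ hl₀).map δ ≫ μ).snd = δ.right ≫ μ.snd := rfl
    rw [h5]
    rfl

lemma psi_natural_right {c : Comma (p.toFunctor : ↑E ⥤ ↑B) (q.toFunctor : ↑X ⥤ ↑B)} {s s' : PbObj p q}
    (μ : (lAux p q l₀ adj₀ hl₀).obj c ⟶ s) (g : s ⟶ s') :
    psi p q l₀ adj₀ hl₀ c s' (μ ≫ g) =
      psi p q l₀ adj₀ hl₀ c s μ ≫ (zetaPb p q).map g := by
  apply CommaMorphism.ext
  · simp [psi, zetaPb]
    exact (Category.assoc _ _ _).symm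
  · simp [psi, zetaPb]
    rfl

/-- the pulled-back adjunction, on the strict pullback model. -/
noncomputable def adjPb : lAux p q l₀ adj₀ hl₀ ⊣ zetaPb p q :=
  Adjunction.mkOfHomEquiv
  { homEquiv := fun c s => Equiv.ofBijective (psi p q l₀ adj₀ hl₀ c s)
      ⟨psi_injective p q l₀ adj₀ hl₀ c s, psi_surjective p q l₀ adj₀ hl₀ c s⟩
    homEquiv_naturality_left_symm := by
      intro c' c s δ g
      set eqc := Equiv.ofBijective (psi p q l₀ adj₀ hl₀ c s)
        ⟨psi_injective p q l₀ adj₀ hl₀ c s, psi_surjective p q l₀ adj₀ hl₀ c s⟩ with heqc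
      set eqc' := Equiv.ofBijective (psi p q l₀ adj₀ hl₀ c' s)
        ⟨psi_injective p q l₀ adj₀ hl₀ c' s, psi_surjective p q l₀ adj₀ hl₀ c' s⟩ with heqc'
      apply eqc'.injective
      rw [Equiv.apply_symm_apply]
      have h1 : eqc' ((lAux p q l₀ adj₀ hl₀).map δ ≫ eqc.symm g) =
          psi p q l₀ adj₀ hl₀ c' s ((lAux p q l₀ adj₀ hl₀).map δ ≫ eqc.symm g) := rfl
      rw [h1, psi_natural_left p q l₀ adj₀ hl₀ δ (eqc.symm g)]
      have h2 : psi p q l₀ adj₀ hl₀ c s (eqc.symm g) = eqc (eqc.symm g) := rfl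
      rw [h2, Equiv.apply_symm_apply]
    homEquiv_naturality_right := by
      intro c s s' μ g
      exact psi_natural_right p q l₀ adj₀ hl₀ μ g }

end Adj3

section Final

variable (pf : P ⟶ E) (px : P ⟶ X) (p : E ⟶ B) (q : X ⟶ B)
variable (w : pf ≫ p = px ≫ q)

/-- general form of `zetaFunctor`. -/
def zetaGen : (P : Type u) ⥤ Comma (p.toFunctor : ↑E ⥤ ↑B) (q.toFunctor : ↑X ⥤ ↑B) where
  obj e :=
    { left := pf.toFunctor.obj e
      right := px.toFunctor.obj e
      hom := eqToHom (Functor.congr_obj (congrArg Cat.Hom.toFunctor w) e) }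
  map u :=
    { left := pf.toFunctor.map u
      right := px.toFunctor.map u
      w := by
        have h := Functor.congr_hom (congrArg Cat.Hom.toFunctor w) u
        simp only [Cat.Hom.comp_obj, Cat.Hom.comp_map] at h ⊢
        simp [h] }
  map_id := by
    intros; apply CommaMorphism.ext <;> simp
  map_comp := by
    intros; apply CommaMorphism.ext <;> simp

def zetaGenCat : P ⟶ catOf (Comma (p.toFunctor : ↑E ⥤ ↑B) (q.toFunctor : ↑X ⥤ ↑B)) := ⟨zetaGen pf px p q w⟩

@[simp] lemma zetaGenCat_toFunctor : (zetaGenCat pf px p q w).toFunctor = zetaGen pf px p q w := rfl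

def commaUnitCatGen : E ⟶ catOf (Comma (p.toFunctor : ↑E ⥤ ↑B) (𝟭 ↑B)) :=
  ⟨commaUnit (p.toFunctor : ↑E ⥤ ↑B)⟩

@[simp] lemma commaUnitCatGen_toFunctor : (commaUnitCatGen p).toFunctor = commaUnit p.toFunctor := rfl

theorem top_square : pf ≫ commaUnitCatGen p = zetaGenCat pf px p q w ≫ extendGenCat p q := by
  apply cat_hom_ext
  case h_obj =>
    refine fun e => id ?_
    refine comma_obj_ext (h1 := id rfl) (h2 := id (Functor.congr_obj (congrArg Cat.Hom.toFunctor w) e)) ?_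
    simp [commaUnitCatGen, commaUnit, zetaGenCat, zetaGen, extendGenCat, extendGen]
    erw [eqToHom_trans]
  case h_map =>
    intro a b u
    apply CommaMorphism.ext
    · simp [commaUnitCatGen, commaUnit, zetaGenCat, zetaGen, extendGenCat, extendGen,
        Comma.eqToHom_left]
      erw [Comma.eqToHom_left, Comma.eqToHom_left]
      simp
    · have h := Functor.congr_hom (congrArg Cat.Hom.toFunctor w) u
      simp only [Cat.Hom.comp_obj, Cat.Hom.comp_map] at h
      simp [commaUnitCatGen, commaUnit, zetaGenCat, zetaGen, extendGenCat, extendGen,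
        Comma.eqToHom_right, h]
      erw [Comma.eqToHom_right, Comma.eqToHom_right]

variable (hPB : IsPullback pf px p q)

include hPB in
theorem main_isPullback :
    IsPullback pf (zetaGenCat pf px p q w) (commaUnitCatGen p) (extendGenCat p q) := by
  refine IsPullback.of_bot ?_ (top_square pf px p q w) (isPullback_extend p q)
  show IsPullback pf (zetaGenCat pf px p q w ≫ sndGenCat p q)
    (commaUnitCatGen p ≫ sndUnitCat p) q
  have e1 : zetaGenCat pf px p q w ≫ sndGenCat p q = px := rfl
  have e2 : commaUnitCatGen p ≫ sndUnitCat p = p := rfl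
  rw [e1, e2]
  exact hPB

section withAdj

variable (l₀ : Comma (p.toFunctor : ↑E ⥤ ↑B) (𝟭 ↑B) ⥤ (E : Type u))
variable (adj₀ : l₀ ⊣ commaUnit (p.toFunctor : ↑E ⥤ ↑B))
variable (hl₀ : l₀ ⋙ (p.toFunctor : ↑E ⥤ ↑B) = Comma.snd (p.toFunctor : ↑E ⥤ ↑B) (𝟭 ↑B))

/-- the strict-pullback comparison composed with `zetaPb` is `zetaGen`. -/
theorem KzetaPb :
    (Kf pf px p q w : (P : Type u) ⥤ PbObj p q) ⋙ zetaPb p q = zetaGen pf px p q w := rfl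

include adj₀ hl₀ hPB

noncomputable def equivJ : (PbObj p q) ≌ (P : Type u) :=
  CategoryTheory.Equivalence.mk (Jf pf px p q hPB).toFunctor (Kf pf px p q w)
    (eqToIso (show 𝟭 (PbObj p q) = _ from congrArg Cat.Hom.toFunctor (JK pf px p q w hPB).symm))
    (eqToIso (show _ = 𝟭 (P : Type u) from congrArg Cat.Hom.toFunctor (KJ pf px p q w hPB)))

theorem adj_exists :
    ∃ l : Comma (p.toFunctor : ↑E ⥤ ↑B) (q.toFunctor : ↑X ⥤ ↑B) ⥤ (P : Type u),
      Nonempty (l ⊣ zetaGen pf px p q w) ∧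
        l ⋙ (px.toFunctor : ↑P ⥤ ↑X) = Comma.snd (p.toFunctor : ↑E ⥤ ↑B) (q.toFunctor : ↑X ⥤ ↑B) := by
  refine ⟨lAux p q l₀ adj₀ hl₀ ⋙ (equivJ pf px p q w hPB).functor, ⟨?_⟩, ?_⟩
  · have adj1 := (adjPb p q l₀ adj₀ hl₀).comp (equivJ pf px p q w hPB).toAdjunction
    have e3 : (equivJ pf px p q w hPB).inverse ⋙ zetaPb p q = zetaGen pf px p q w :=
      KzetaPb pf px p q w
    exact adj1.ofNatIsoRight (eqToIso e3)
  · have e4 : (equivJ pf px p q w hPB).functor ⋙ (px.toFunctor : ↑P ⥤ ↑X) =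
        (PbSnd p q : PbObj p q ⥤ (X : Type u)) :=
      congrArg Cat.Hom.toFunctor (Jf_snd pf px p q hPB)
    show lAux p q l₀ adj₀ hl₀ ⋙ ((equivJ pf px p q w hPB).functor ⋙ (px.toFunctor : ↑P ⥤ ↑X)) = _
    rw [e4]
    rfl

end withAdj
end Final

end ZetaAux
end ZetaAuxSec

section

variable {L : Type v} [Category L] (F G : L ⥤ Cat.{u, u}) (α : F ⟶ G)
  {x y : L} (f : x ⟶ y)

/-- The canonical comparison functor `F x ⥤ α_y ↓ G f` induced by the
naturality square `α_y ∘ F f = G f ∘ α_x`. -/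
def zetaFunctor :
    (F.obj x : Type u) ⥤ Comma ((α.app y).toFunctor : ↑(F.obj y) ⥤ ↑(G.obj y)) ((G.map f).toFunctor : ↑(G.obj x) ⥤ ↑(G.obj y)) where
  obj e :=
    { left := (F.map f).toFunctor.obj e
      right := (α.app x).toFunctor.obj e
      hom := eqToHom (Functor.congr_obj (congrArg Cat.Hom.toFunctor (α.naturality f)) e) }
  map u :=
    { left := (F.map f).toFunctor.map u
      right := (α.app x).toFunctor.map u
      w := by
        have h := Functor.congr_hom (congrArg Cat.Hom.toFunctor (α.naturality f)) u
        simp only [Cat.Hom.comp_toFunctor, Functor.comp_obj, Functor.comp_map] at h ⊢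
        simp [h] }
  map_id := by
    intros; apply CommaMorphism.ext <;> simp
  map_comp := by
    intros; apply CommaMorphism.ext <;> simp

/-- The functor `α_y ↓ G f ⥤ α_y ↓ G y` given by postcomposition with `G f`
on the second component. -/
def commaExtend :
    Comma ((α.app y).toFunctor : ↑(F.obj y) ⥤ ↑(G.obj y)) ((G.map f).toFunctor : ↑(G.obj x) ⥤ ↑(G.obj y)) ⥤
      Comma ((α.app y).toFunctor : ↑(F.obj y) ⥤ ↑(G.obj y)) (𝟭 (G.obj y)) where
  obj c := { left := c.left, right := (G.map f).toFunctor.obj c.right, hom := c.hom }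
  map u := { left := u.left, right := (G.map f).toFunctor.map u.right, w := by simpa using u.w }

/-- The above functors, as morphisms of `Cat`. -/
def zetaCat : F.obj x ⟶ Cat.of (Comma ((α.app y).toFunctor : ↑(F.obj y) ⥤ ↑(G.obj y)) ((G.map f).toFunctor : ↑(G.obj x) ⥤ ↑(G.obj y))) :=
  (zetaFunctor F G α f).toCatHom

def commaUnitCat : F.obj y ⟶ Cat.of (Comma ((α.app y).toFunctor : ↑(F.obj y) ⥤ ↑(G.obj y)) (𝟭 (G.obj y))) :=
  (commaUnit ((α.app y).toFunctor : ↑(F.obj y) ⥤ ↑(G.obj y))).toCatHom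

def commaExtendCat :
    Cat.of (Comma ((α.app y).toFunctor : ↑(F.obj y) ⥤ ↑(G.obj y)) ((G.map f).toFunctor : ↑(G.obj x) ⥤ ↑(G.obj y))) ⟶
      Cat.of (Comma ((α.app y).toFunctor : ↑(F.obj y) ⥤ ↑(G.obj y)) (𝟭 (G.obj y))) :=
  (commaExtend F G α f).toCatHom

/-- Let `α : F ⟶ G` be a natural transformation between pullback-preserving
functors `F, G : L ⥤ Cat` whose naturality squares are pullbacks of
categories, and let `f : x ⟶ y` in `L`.  Then the canonical functor
`ζ : F x ⥤ α_y ↓ G f` is the pullback along `G f` of the canonical functor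
`η : F y ⥤ α_y ↓ G y`; in particular (given that `η` admits a left adjoint
over `G y`, as `α_y` is an opfibration), `ζ` admits a left adjoint over
`G x`. -/
theorem zeta_isPullback_and_hasLeftAdjoint
    [Limits.PreservesLimitsOfShape Limits.WalkingCospan F]
    [Limits.PreservesLimitsOfShape Limits.WalkingCospan G]
    (hcart : ∀ {a b : L} (g : a ⟶ b),
      IsPullback (F.map g) (α.app a) (α.app b) (G.map g))
    (hη : ∃ l₀ : Comma ((α.app y).toFunctor : ↑(F.obj y) ⥤ ↑(G.obj y)) (𝟭 (G.obj y)) ⥤ (F.obj y : Type u),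
      Nonempty (l₀ ⊣ commaUnit ((α.app y).toFunctor : ↑(F.obj y) ⥤ ↑(G.obj y))) ∧
        l₀ ⋙ ((α.app y).toFunctor : ↑(F.obj y) ⥤ ↑(G.obj y)) =
          Comma.snd ((α.app y).toFunctor : ↑(F.obj y) ⥤ ↑(G.obj y)) (𝟭 (G.obj y))) :
    IsPullback (F.map f) (zetaCat F G α f) (commaUnitCat F G α (y := y)) (commaExtendCat F G α f) ∧
    ∃ l : Comma ((α.app y).toFunctor : ↑(F.obj y) ⥤ ↑(G.obj y)) ((G.map f).toFunctor : ↑(G.obj x) ⥤ ↑(G.obj y)) ⥤ (F.obj x : Type u),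
      Nonempty (l ⊣ zetaFunctor F G α f) ∧
        l ⋙ ((α.app x).toFunctor : ↑(F.obj x) ⥤ ↑(G.obj x)) =
          Comma.snd ((α.app y).toFunctor : ↑(F.obj y) ⥤ ↑(G.obj y)) ((G.map f).toFunctor : ↑(G.obj x) ⥤ ↑(G.obj y)) := by
  obtain ⟨l₀, ⟨adj₀⟩, hl₀⟩ := hη
  constructor
  · exact ZetaAux.main_isPullback (F.map f) (α.app x) (α.app y) (G.map f)
      (α.naturality f) (hcart f)
  · exact ZetaAux.adj_exists (F.map f) (α.app x) (α.app y) (G.map f)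
      (α.naturality f) (hcart f) l₀ adj₀ hl₀

end
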